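/- Fix reals α, β, λ > 0 with λ > α, and set κ = λ+α+β. Define the freshness function E[Δ](μ) = (κμ² + (κ²−2αβ)μ + λακ)/(κμ² + (κ²+βλ)μ + λ(α+β)κ) for μ ≥ 0. Then E[Δ] is strictly monotone increasing on [0,∞). -/
import Mathlib


/-- If λ > α then the freshness E[Δ](μ) is strictly monotone increasing on
[0,∞). -/
theorem freshness_strictMono
    (α β lam : ℝ) (hα : 0 < α) (hβ : 0 < β) (hlam : 0 < lam) (hlamα : α < lam)
    (κ : ℝ) (hκ : κ = lam + α + β) :
    StrictMonoOn (fun μ : ℝ =>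
        (κ * μ ^ 2 + (κ ^ 2 - 2 * α * β) * μ + lam * α * κ) /
        (κ * μ ^ 2 + (κ ^ 2 + β * lam) * μ + lam * (α + β) * κ))
      (Set.Ici 0) := by
  have hκ0 : 0 < κ := by rw [hκ]; linarith
  intro x hx y hy hxy
  simp only [Set.mem_Ici] at hx hy
  have hDx : 0 < κ * x ^ 2 + (κ ^ 2 + β * lam) * x + lam * (α + β) * κ := by
    have h1 : 0 ≤ κ * x ^ 2 := by positivity
    have h2 : 0 ≤ (κ ^ 2 + β * lam) * x := by positivity
    have h3 : 0 < lam * (α + β) * κ := by positivity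
    linarith
  have hDy : 0 < κ * y ^ 2 + (κ ^ 2 + β * lam) * y + lam * (α + β) * κ := by
    have h1 : 0 ≤ κ * y ^ 2 := by positivity
    have h2 : 0 ≤ (κ ^ 2 + β * lam) * y := by positivity
    have h3 : 0 < lam * (α + β) * κ := by positivity
    linarith
  simp only
  rw [div_lt_div_iff₀ hDx hDy]
  have key : (κ * y ^ 2 + (κ ^ 2 - 2 * α * β) * y + lam * α * κ) *
        (κ * x ^ 2 + (κ ^ 2 + β * lam) * x + lam * (α + β) * κ) -
      (κ * x ^ 2 + (κ ^ 2 - 2 * α * β) * x + lam * α * κ) *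
        (κ * y ^ 2 + (κ ^ 2 + β * lam) * y + lam * (α + β) * κ) =
      β * (y - x) * ((lam + 2 * α) * κ * (x * y) + lam * κ * κ * (x + y) +
        lam * κ * (lam ^ 2 - α ^ 2 + β ^ 2 + lam * α + 2 * β * lam)) := by
    subst hκ; ring
  have hpos : 0 < β * (y - x) * ((lam + 2 * α) * κ * (x * y) + lam * κ * κ * (x + y) +
      lam * κ * (lam ^ 2 - α ^ 2 + β ^ 2 + lam * α + 2 * β * lam)) := by
    apply mul_pos (mul_pos hβ (by linarith))
    have h1 : 0 ≤ (lam + 2 * α) * κ * (x * y) := by positivity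
    have h2 : 0 ≤ lam * κ * κ * (x + y) := by positivity
    have h3 : 0 < lam * κ * (lam ^ 2 - α ^ 2 + β ^ 2 + lam * α + 2 * β * lam) := by
      apply mul_pos (by positivity); nlinarith
    linarith
  linarith
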